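/- Assume the CFL condition λ L_V ≤ 1, and let K ≥ 1. If 1 ≤ y_i^0 ≤ K for all i = 1,…,N−1, then 1 ≤ y_i^n ≤ K for all i = 1,…,N−1 and all n ≥ 0, where (y_i^n) is generated by the periodic explicit Euler FtL scheme. -/
import Mathlib


/-- `y n i`, `i = 1, …, N-1`, is generated by the periodic explicit Euler
Follow-the-Leader scheme `y_i^{n+1} = y_i^n + λ(V(y_{i+1}^n) − V(y_i^n))`,
with the periodic convention `y_N^n := y_1^n`. -/
def IsEulerFtL (N : ℕ) (lam : ℝ) (V : ℝ → ℝ) (y : ℕ → ℕ → ℝ) : Prop :=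
  (∀ n : ℕ, y n N = y n 1) ∧
  ∀ n : ℕ, ∀ i ∈ Finset.Icc 1 (N - 1),
    y (n + 1) i = y n i + lam * (V (y n (i + 1)) - V (y n i))

/-- Under the CFL condition, the bounds `1 ≤ y_i^n ≤ K` are propagated by the
periodic explicit Euler FtL scheme. -/
theorem eulerFtL_invariant_region
    (N : ℕ) (hN : 2 ≤ N) (ℓ Δt : ℝ) (hℓ : 0 < ℓ) (hΔt : 0 < Δt)
    (V : ℝ → ℝ) (LV : NNReal) (hVlip : LipschitzWith LV V) (hVmono : Monotone V)
    (hCFL : Δt / ℓ * (LV : ℝ) ≤ 1)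
    (y : ℕ → ℕ → ℝ) (hy : IsEulerFtL N (Δt / ℓ) V y)
    (K : ℝ) (hK : 1 ≤ K)
    (h0 : ∀ i ∈ Finset.Icc 1 (N - 1), 1 ≤ y 0 i ∧ y 0 i ≤ K) :
    ∀ n : ℕ, ∀ i ∈ Finset.Icc 1 (N - 1), 1 ≤ y n i ∧ y n i ≤ K := by
  obtain ⟨hper, hrec⟩ := hy
  set lam := Δt / ℓ with hlam
  have hlam0 : 0 ≤ lam := le_of_lt (div_pos hΔt hℓ)
  intro n
  induction n with
  | zero => exact h0
  | succ n ih =>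
    intro i hi
    have hyi := ih i hi
    -- bounds for y n (i+1)
    have hnext : 1 ≤ y n (i + 1) ∧ y n (i + 1) ≤ K := by
      rcases Finset.mem_Icc.mp hi with ⟨hi1, hi2⟩
      rcases lt_or_eq_of_le hi2 with h | h
      · exact ih (i + 1) (Finset.mem_Icc.mpr ⟨le_trans hi1 (Nat.le_succ i), h⟩)
      · have : i + 1 = N := by omega
        rw [this, hper n]
        exact ih 1 (Finset.mem_Icc.mpr ⟨le_refl 1, by omega⟩)
    have heq := hrec n i hi
    have hlip : ∀ a b : ℝ, V a - V b ≤ (LV : ℝ) * |a - b| := by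
      intro a b
      have := hVlip.dist_le_mul a b
      rw [Real.dist_eq, Real.dist_eq] at this
      exact le_trans (le_abs_self _) this
    constructor
    · -- lower bound
      have h1 : V (y n i) - V (y n (i + 1)) ≤ (LV : ℝ) * (y n i - 1) := by
        have hm : V (y n i) - V (y n (i + 1)) ≤ V (y n i) - V 1 :=
          sub_le_sub_left (hVmono hnext.1) _
        refine le_trans hm (le_trans (hlip _ _) ?_)
        have : |y n i - 1| = y n i - 1 := abs_of_nonneg (by linarith [hyi.1])
        rw [this]
      have h2 : lam * (V (y n (i+1)) - V (y n i)) ≥ - (lam * ((LV : ℝ) * (y n i - 1))) := by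
        have := mul_le_mul_of_nonneg_left h1 hlam0
        linarith
      have h3 : lam * ((LV : ℝ) * (y n i - 1)) ≤ y n i - 1 := by
        have : lam * (LV : ℝ) * (y n i - 1) ≤ 1 * (y n i - 1) :=
          mul_le_mul_of_nonneg_right hCFL (by linarith [hyi.1])
        nlinarith
      rw [heq]; linarith
    · -- upper bound
      have h1 : V (y n (i + 1)) - V (y n i) ≤ (LV : ℝ) * (K - y n i) := by
        have hm : V (y n (i + 1)) - V (y n i) ≤ V K - V (y n i) :=
          sub_le_sub_right (hVmono hnext.2) _
        refine le_trans hm (le_trans (hlip _ _) ?_)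
        have : |K - y n i| = K - y n i := abs_of_nonneg (by linarith [hyi.2])
        rw [this]
      have h3 : lam * ((LV : ℝ) * (K - y n i)) ≤ K - y n i := by
        have : lam * (LV : ℝ) * (K - y n i) ≤ 1 * (K - y n i) :=
          mul_le_mul_of_nonneg_right hCFL (by linarith [hyi.2])
        nlinarith
      have h2 : lam * (V (y n (i+1)) - V (y n i)) ≤ lam * ((LV : ℝ) * (K - y n i)) :=
        mul_le_mul_of_nonneg_left h1 hlam0
      rw [heq]; linarith
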